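/- For all t > 0 and all x, y ∈ ℝ², the Mehler kernel obeys the Gaussian upper bound |K(t,x,y)| ≤ (1/(4πt)) e^{−|x−y|²/(4t)}. -/

import Mathlib

open MeasureTheory Real Set

/-- The Mehler kernel `K(t,x,y)` of the Landau Hamiltonian with constant magnetic field `B₀`. -/
noncomputable def mehlerK (B₀ t : ℝ) (x y : ℝ × ℝ) : ℂ :=
  ((B₀ / (4 * Real.pi * Real.sinh (B₀ * t)) : ℝ) : ℂ) *
    Complex.exp
      (-(((B₀ * ((x.1 - y.1) ^ 2 + (x.2 - y.2) ^ 2) / (4 * Real.tanh (B₀ * t))) : ℝ) : ℂ)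
        - Complex.I * ((B₀ / 2 : ℝ) : ℂ) * (((x.1 * y.2 - x.2 * y.1) : ℝ) : ℂ))

lemma aux_tanh_le_self {a : ℝ} (ha : 0 ≤ a) : Real.tanh a ≤ a := by
  rw [Real.tanh_eq_sinh_div_cosh, div_le_iff₀ (Real.cosh_pos a)]
  set f : ℝ → ℝ := fun x => x * Real.cosh x - Real.sinh x with hf
  have hd : ∀ x : ℝ, HasDerivAt f (x * Real.sinh x) x := by
    intro x
    have h := ((hasDerivAt_id x).mul (Real.hasDerivAt_cosh x)).sub (Real.hasDerivAt_sinh x)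
    exact h.congr_deriv (by simp only [one_mul, id]; ring)
  have hmono : MonotoneOn f (Ici (0:ℝ)) := by
    apply monotoneOn_of_deriv_nonneg (convex_Ici 0)
    · exact (Continuous.sub (continuous_id.mul Real.continuous_cosh)
        Real.continuous_sinh).continuousOn
    · intro x _
      exact (hd x).differentiableAt.differentiableWithinAt
    · intro x hx
      rw [interior_Ici] at hx
      rw [(hd x).deriv]
      exact mul_nonneg hx.le (Real.sinh_nonneg_iff.mpr hx.le)
  have h0 : f 0 ≤ f a := hmono (le_refl (0:ℝ)) ha ha
  simp only [hf, Real.cosh_zero, Real.sinh_zero, mul_zero, zero_mul, sub_zero, zero_sub,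
    neg_nonpos] at h0 ⊢
  linarith [h0]

/-- **Gaussian upper bound for the Mehler kernel.** For `B₀ > 0`, all `t > 0` and `x, y ∈ ℝ²`,
`|K(t,x,y)| ≤ (1/(4πt)) e^{−|x−y|²/(4t)}`. -/
theorem mehlerK_gaussian_bound (B₀ : ℝ) (hB : 0 < B₀) (t : ℝ) (ht : 0 < t) (x y : ℝ × ℝ) :
    ‖mehlerK B₀ t x y‖ ≤
      1 / (4 * Real.pi * t) *
        Real.exp (-(((x.1 - y.1) ^ 2 + (x.2 - y.2) ^ 2)) / (4 * t)) := by
  have ha : 0 < B₀ * t := mul_pos hB ht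
  have hs : B₀ * t < Real.sinh (B₀ * t) := Real.self_lt_sinh_iff.mpr ha
  have hsp : 0 < Real.sinh (B₀ * t) := lt_trans ha hs
  have hth : 0 < Real.tanh (B₀ * t) := by rw [Real.tanh_eq_sinh_div_cosh]; exact div_pos hsp (Real.cosh_pos _)
  have hthle : Real.tanh (B₀ * t) ≤ B₀ * t := aux_tanh_le_self ha.le
  have hr : 0 ≤ (x.1 - y.1) ^ 2 + (x.2 - y.2) ^ 2 := by positivity
  set r := (x.1 - y.1) ^ 2 + (x.2 - y.2) ^ 2
  have hπ := Real.pi_pos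
  rw [mehlerK, norm_mul, Complex.norm_real, Real.norm_eq_abs, Complex.norm_exp]
  have hre : ∀ (u v w : ℝ), (-(u:ℂ) - Complex.I * (v:ℂ) * (w:ℂ)).re = -u := by
    intro u v w
    simp
  rw [hre]
  have hc : |B₀ / (4 * Real.pi * Real.sinh (B₀ * t))| ≤ 1 / (4 * Real.pi * t) := by
    rw [abs_of_pos (by positivity)]
    rw [div_le_div_iff₀ (by positivity) (by positivity)]
    have : B₀ * t ≤ Real.sinh (B₀ * t) := hs.le
    nlinarith
  have he : Real.exp (-(B₀ * r / (4 * Real.tanh (B₀ * t)))) ≤ Real.exp (-r / (4 * t)) := by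
    apply Real.exp_le_exp.mpr
    rw [neg_div, neg_le_neg_iff, div_le_div_iff₀ (by positivity) (by positivity)]
    nlinarith
  exact mul_le_mul hc he (Real.exp_pos _).le (by positivity)
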